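/- arXiv:0709.1252 — 2 statements merged into one kernel-verified Lean document; each statement's English description precedes it below -/
import Mathlib

section
/- Let $K \subset T^N$ be a subtorus with Lie algebra $k$, and let $\mu = (\mu_1, \mu_{\mathbb{C}}): \mathbb{C}^N \times \mathbb{C}^N \to k^* \times k^*_{\mathbb{C}}$ be the hyperkähler moment map, $\mu_1(z,w) = \pi\sum_i(|z_i|^2 - |w_i|^2)\iota^* u_i$, $\mu_{\mathbb{C}}(z,w) = -2\pi\sqrt{-1}\sum_i z_i w_i \iota^* u_i$. Then $(z,w)$ is a critical point of $\mu$ if and only if $\mathrm{span}\{\iota^* u_i : (z_i, w_i) \ne (0,0)\} \subsetneq k^*$. -/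
open Finset Complex

private lemma key' (z w : ℂ) (h : ¬ (z = 0 ∧ w = 0)) (t : ℝ) (s : ℂ) :
    ∃ a b : ℂ, 2 * ((starRingEnd ℂ) z * a).re - 2 * ((starRingEnd ℂ) w * b).re = t ∧
      a * w + z * b = s := by
  rcases not_and_or.mp h with hz | hw
  · set lam : ℝ := (t + 2 * ((starRingEnd ℂ) w * (s / z)).re) / (2 * (normSq z + normSq w)) with hlam
    refine ⟨(lam : ℂ) * z, s / z - (lam : ℂ) * w, ?_, ?_⟩
    · have hnz : normSq z + normSq w ≠ 0 := by
        have := Complex.normSq_pos.mpr hz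
        have := Complex.normSq_nonneg w
        positivity
      have e1 : ((starRingEnd ℂ) z * ((lam : ℂ) * z)).re = lam * normSq z := by
        rw [mul_left_comm]
        simp [Complex.re_ofReal_mul, Complex.normSq_apply]
      have e2 : ((starRingEnd ℂ) w * (s / z - (lam : ℂ) * w)).re
          = ((starRingEnd ℂ) w * (s / z)).re - lam * normSq w := by
        rw [mul_sub, Complex.sub_re, mul_left_comm]
        simp [Complex.re_ofReal_mul, Complex.normSq_apply]
      rw [e1, e2, hlam]
      field_simp
      ring
    · field_simp
      ring
  · set mu : ℝ := (2 * ((starRingEnd ℂ) z * (s / w)).re - t) / (2 * (normSq z + normSq w)) with hmu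
    refine ⟨s / w - (mu : ℂ) * z, (mu : ℂ) * w, ?_, ?_⟩
    · have hnz : normSq z + normSq w ≠ 0 := by
        have := Complex.normSq_pos.mpr hw
        have := Complex.normSq_nonneg z
        positivity
      have e1 : ((starRingEnd ℂ) z * (s / w - (mu : ℂ) * z)).re
          = ((starRingEnd ℂ) z * (s / w)).re - mu * normSq z := by
        rw [mul_sub, Complex.sub_re, mul_left_comm]
        simp [Complex.re_ofReal_mul, Complex.normSq_apply]
      have e2 : ((starRingEnd ℂ) w * ((mu : ℂ) * w)).re = mu * normSq w := by
        rw [mul_left_comm]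
        simp [Complex.re_ofReal_mul, Complex.normSq_apply]
      rw [e1, e2, hmu]
      field_simp
      ring
    · field_simp
      ring

private lemma sum_ext' {M : Type*} [AddCommMonoid M] {N : ℕ} (P : Fin N → Prop) [DecidablePred P]
    (F : Fin N → M) (hF : ∀ i, ¬ P i → F i = 0) :
    ∑ j : {i // P i}, F j.1 = ∑ i, F i := by
  rw [← Finset.sum_subtype (Finset.univ.filter P) (by simp) F]
  exact Finset.sum_filter_of_ne (fun i _ hne => by by_contra hp; exact hne (hF i hp))

/-- Proposition 3.8(1): `(z,w)` is a critical point of the hyperkähler moment map `μ`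
(i.e. its differential `dμ_{(z,w)} = ∑ (df)_{(zᵢ,wᵢ)} ⊗ ι*uᵢ` is not surjective onto
`k* × k*_ℂ`) iff `span{ι*uᵢ : (zᵢ,wᵢ) ≠ (0,0)} ⊊ k*`. -/
theorem stmt6 (N : ℕ) (k : Submodule ℝ (Fin N → ℝ)) (z w : Fin N → ℂ) :
    (¬ ∀ (β1 : Module.Dual ℝ k) (β2 : k →ₗ[ℝ] ℂ), ∃ ζ ω : Fin N → ℂ,
        ∀ X : k,
          β1 X = Real.pi * ∑ i,
            (2 * ((starRingEnd ℂ) (z i) * ζ i).re - 2 * ((starRingEnd ℂ) (w i) * ω i).re)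
              * (X : Fin N → ℝ) i ∧
          β2 X = (-2) * (Real.pi : ℂ) * Complex.I *
            ∑ i, (ζ i * w i + z i * ω i) * (((X : Fin N → ℝ) i : ℝ) : ℂ))
    ↔ Submodule.span ℝ {f : Module.Dual ℝ k |
        ∃ i, (z i, w i) ≠ (0, 0) ∧ f = (LinearMap.proj i).comp k.subtype} ≠ ⊤ := by
  classical
  rw [Ne, not_iff_not]
  set u : Fin N → Module.Dual ℝ k := fun i => (LinearMap.proj i).comp k.subtype with hu
  set P : Fin N → Prop := fun i => (z i, w i) ≠ (0, 0) with hP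
  have hset : {f : Module.Dual ℝ k |
      ∃ i, (z i, w i) ≠ (0, 0) ∧ f = (LinearMap.proj i).comp k.subtype}
      = Set.range (fun j : {i // P i} => u j.1) := by
    ext f
    constructor
    · rintro ⟨i, hi, rfl⟩; exact ⟨⟨i, hi⟩, rfl⟩
    · rintro ⟨⟨i, hi⟩, rfl⟩; exact ⟨i, hi, rfl⟩
  rw [hset]
  have hnotP : ∀ i, ¬ P i → z i = 0 ∧ w i = 0 := by
    intro i hi
    have : (z i, w i) = (0, 0) := not_not.mp hi
    exact ⟨congrArg Prod.fst this, congrArg Prod.snd this⟩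
  constructor
  · -- surjectivity → span = ⊤
    intro hsurj
    rw [eq_top_iff]
    rintro γ -
    obtain ⟨ζ, ω, hζω⟩ := hsurj γ 0
    have hγ : γ = ∑ i, (Real.pi *
        (2 * ((starRingEnd ℂ) (z i) * ζ i).re - 2 * ((starRingEnd ℂ) (w i) * ω i).re)) • u i := by
      apply LinearMap.ext; intro X
      rw [(hζω X).1, Finset.mul_sum]
      simp only [LinearMap.sum_apply, LinearMap.smul_apply, smul_eq_mul, hu,
        LinearMap.comp_apply, LinearMap.proj_apply, Submodule.coe_subtype]
      exact Finset.sum_congr rfl fun i _ => by ring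
    rw [hγ]
    refine Submodule.sum_mem _ fun i _ => ?_
    by_cases hi : P i
    · exact Submodule.smul_mem _ _ (Submodule.subset_span ⟨⟨i, hi⟩, rfl⟩)
    · obtain ⟨hz0, hw0⟩ := hnotP i hi
      simp [hz0, hw0]
  · -- span = ⊤ → surjectivity
    intro hspan β1 β2
    have hmem : ∀ γ : Module.Dual ℝ k,
        γ ∈ Submodule.span ℝ (Set.range fun j : {i // P i} => u j.1) :=
      fun γ => hspan.symm ▸ Submodule.mem_top
    have dual_eq : ∀ (γ : Module.Dual ℝ k), ∃ c : Fin N → ℝ,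
        (∀ i, ¬ P i → c i = 0) ∧ ∀ X : k, γ X = ∑ i, c i * (X : Fin N → ℝ) i := by
      intro γ
      obtain ⟨c, hc⟩ := (Submodule.mem_span_range_iff_exists_fun (R := ℝ)).mp (hmem γ)
      refine ⟨fun i => if h : P i then c ⟨i, h⟩ else 0, fun i hi => dif_neg hi, fun X => ?_⟩
      rw [← hc]
      simp only [LinearMap.sum_apply, LinearMap.smul_apply, smul_eq_mul, hu,
        LinearMap.comp_apply, LinearMap.proj_apply, Submodule.coe_subtype]
      rw [show (∑ j : {i // P i}, c j * (X : Fin N → ℝ) j.1)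
          = ∑ j : {i // P i}, (if h : P j.1 then c ⟨j.1, h⟩ else 0) * (X : Fin N → ℝ) j.1 from
        Finset.sum_congr rfl fun j _ => by rw [dif_pos j.2]]
      exact sum_ext' P (fun i => (if h : P i then c ⟨i, h⟩ else 0) * (X : Fin N → ℝ) i)
        (fun i hi => by simp [hi])
    obtain ⟨c, hc0, hc⟩ := dual_eq β1
    obtain ⟨d, hd0, hd⟩ := dual_eq (Complex.reLm.comp β2)
    obtain ⟨e, he0, he⟩ := dual_eq (Complex.imLm.comp β2)
    have hden : ((-2 : ℂ) * (Real.pi : ℂ) * Complex.I) ≠ 0 := by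
      simp [Real.pi_ne_zero, Complex.I_ne_zero]
    have hex : ∀ i : Fin N, ∃ a b : ℂ,
        2 * ((starRingEnd ℂ) (z i) * a).re - 2 * ((starRingEnd ℂ) (w i) * b).re = c i / Real.pi ∧
        a * w i + z i * b
          = (((d i : ℝ) : ℂ) + ((e i : ℝ) : ℂ) * Complex.I) / ((-2) * (Real.pi : ℂ) * Complex.I) := by
      intro i
      by_cases hi : P i
      · exact key' (z i) (w i) (fun hzw => hi (by simp [hP, Prod.ext_iff, hzw.1, hzw.2])) _ _
      · obtain ⟨hz0, hw0⟩ := hnotP i hi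
        exact ⟨0, 0, by simp [hc0 i hi], by simp [hz0, hw0, hd0 i hi, he0 i hi]⟩
    choose ζ ω hA hB using hex
    refine ⟨ζ, ω, fun X => ⟨?_, ?_⟩⟩
    · simp only [hA]
      rw [hc X, Finset.mul_sum]
      exact Finset.sum_congr rfl fun i _ => by field_simp
    · simp only [hB]
      rw [Finset.mul_sum,
        show (∑ i, (-2 : ℂ) * (Real.pi : ℂ) * Complex.I *
            ((((d i : ℝ) : ℂ) + ((e i : ℝ) : ℂ) * Complex.I) / ((-2) * (Real.pi : ℂ) * Complex.I)
              * (((X : Fin N → ℝ) i : ℝ) : ℂ)))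
          = ∑ i, ((((d i : ℝ) : ℂ) + ((e i : ℝ) : ℂ) * Complex.I) * (((X : Fin N → ℝ) i : ℝ) : ℂ))
          from Finset.sum_congr rfl fun i _ => by
            field_simp]
      have hre : (β2 X).re = ∑ i, d i * (X : Fin N → ℝ) i := hd X
      have him : (β2 X).im = ∑ i, e i * (X : Fin N → ℝ) i := he X
      apply Complex.ext
      · rw [hre, Complex.re_sum]
        exact Finset.sum_congr rfl fun i _ => by simp [Complex.mul_re]
      · rw [him, Complex.im_sum]
        exact Finset.sum_congr rfl fun i _ => by simp [Complex.mul_im]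
end

section
/- Suppose $(0,\beta)$ is a regular value of the hyperkähler moment map $\mu$, equivalently for every $(z,w) \in \mu_{\mathbb{C}}^{-1}(\beta)$ one has $\mathrm{span}\{\iota^* u_i : (z_i,w_i) \ne (0,0)\} = k^*$. If moreover for every $(z,w) \in \mu_{\mathbb{C}}^{-1}(\beta)$ we have $\mathrm{span}\{\iota^* u_i : z_i w_i \ne 0\} = k^*$, then for every $\alpha \in k^*$, every point of $\mu_{\mathbb{C}}^{-1}(\beta)$ is $\alpha$-semistable, i.e., $\alpha \in \sum_i \mathbb{R}_{\ge 0}|z_i|^2 \iota^* u_i + \sum_i \mathbb{R}_{\ge 0}|w_i|^2(-\iota^* u_i)$. -/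
open Finset

/-- Proposition 3.8(3): if `(0,β)` is a regular value of `μ` and moreover for every
`(z,w) ∈ μ_ℂ⁻¹(β)` the functionals `{ι*uᵢ : zᵢwᵢ ≠ 0}` span `k*`, then for every `α ∈ k*`
every point of `μ_ℂ⁻¹(β)` is `α`-semistable, i.e.
`α ∈ ∑ ℝ≥0|zᵢ|² ι*uᵢ + ∑ ℝ≥0|wᵢ|²(-ι*uᵢ)`. -/
theorem stmt7 (N : ℕ) (k : Submodule ℝ (Fin N → ℝ)) (β : k →ₗ[ℝ] ℂ)
    (hreg : ∀ z w : Fin N → ℂ,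
      (∀ X : k, β X = (-2) * (Real.pi : ℂ) * Complex.I *
          ∑ i, z i * w i * (((X : Fin N → ℝ) i : ℝ) : ℂ)) →
      Submodule.span ℝ {f : Module.Dual ℝ k |
        ∃ i, (z i, w i) ≠ (0, 0) ∧ f = (LinearMap.proj i).comp k.subtype} = ⊤)
    (hreg2 : ∀ z w : Fin N → ℂ,
      (∀ X : k, β X = (-2) * (Real.pi : ℂ) * Complex.I *
          ∑ i, z i * w i * (((X : Fin N → ℝ) i : ℝ) : ℂ)) →
      Submodule.span ℝ {f : Module.Dual ℝ k |
        ∃ i, z i * w i ≠ 0 ∧ f = (LinearMap.proj i).comp k.subtype} = ⊤) :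
    ∀ (α : Module.Dual ℝ k) (z w : Fin N → ℂ),
      (∀ X : k, β X = (-2) * (Real.pi : ℂ) * Complex.I *
          ∑ i, z i * w i * (((X : Fin N → ℝ) i : ℝ) : ℂ)) →
      ∃ c d : Fin N → ℝ, (∀ i, 0 ≤ c i) ∧ (∀ i, 0 ≤ d i) ∧
        ∀ X : k, α X = ∑ i,
          (c i * ‖z i‖ ^ 2 - d i * ‖w i‖ ^ 2) * (X : Fin N → ℝ) i := by
  intro α z w hβ
  have hspan := hreg2 z w hβ
  set g : Fin N → Module.Dual ℝ k := fun i => (LinearMap.proj i).comp k.subtype with hg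
  have hset : {f : Module.Dual ℝ k | ∃ i, z i * w i ≠ 0 ∧ f = g i}
      = g '' {i | z i * w i ≠ 0} := by
    ext f
    simp only [Set.mem_setOf_eq, Set.mem_image, eq_comm]
  rw [hset] at hspan
  have hα : α ∈ Submodule.span ℝ (g '' {i | z i * w i ≠ 0}) := by
    rw [hspan]; trivial
  rw [Finsupp.mem_span_image_iff_linearCombination] at hα
  obtain ⟨l, hl, hlα⟩ := hα
  refine ⟨fun i => if z i * w i ≠ 0 then max (l i) 0 / (‖z i‖)^2 else 0,
    fun i => if z i * w i ≠ 0 then max (-(l i)) 0 / (‖w i‖)^2 else 0, ?_, ?_, ?_⟩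
  · intro i; dsimp only; split
    · exact div_nonneg (le_max_right _ _) (sq_nonneg _)
    · exact le_refl 0
  · intro i; dsimp only; split
    · exact div_nonneg (le_max_right _ _) (sq_nonneg _)
    · exact le_refl 0
  intro X
  have hkey : ∀ i, (if z i * w i ≠ 0 then max (l i) 0 / (‖z i‖)^2 else 0)
      * ‖z i‖ ^ 2
      - (if z i * w i ≠ 0 then max (-(l i)) 0 / (‖w i‖)^2 else 0)
      * ‖w i‖ ^ 2 = l i := by
    intro i
    by_cases h : z i * w i ≠ 0
    · have hz : z i ≠ 0 := fun hz => h (by simp [hz])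
      have hw : w i ≠ 0 := fun hw => h (by simp [hw])
      have hz2 : (‖z i‖)^2 ≠ 0 := pow_ne_zero _ (by simpa using hz)
      have hw2 : (‖w i‖)^2 ≠ 0 := pow_ne_zero _ (by simpa using hw)
      rw [if_pos h, if_pos h, div_mul_cancel₀ _ hz2, div_mul_cancel₀ _ hw2]
      exact max_zero_sub_max_neg_zero_eq_self _
    · have hl0 : l i = 0 := (Finsupp.mem_supported' ℝ l).mp hl i h
      rw [if_neg h, if_neg h, hl0]; ring
  have happ := congrArg (fun f : Module.Dual ℝ k => f X) hlα
  simp only [Finsupp.linearCombination_apply, Finsupp.sum, LinearMap.coe_sum,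
    Finset.sum_apply, LinearMap.smul_apply, hg, LinearMap.comp_apply, LinearMap.proj_apply,
    Submodule.coe_subtype, smul_eq_mul] at happ
  calc α X = ∑ i ∈ l.support, l i * (X : Fin N → ℝ) i := happ.symm
    _ = ∑ i, l i * (X : Fin N → ℝ) i := by
        refine Finset.sum_subset (Finset.subset_univ _) ?_
        intro i _ h
        simp [Finsupp.notMem_support_iff.mp h]
    _ = _ := by
        refine Finset.sum_congr rfl fun i _ => ?_
        rw [hkey i]
end
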